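/- Let S be an involutive algebra anti-automorphism of M_n(ℂ) ⊕ M_n(ℂ) interchanging the two minimal central projections. Then there is an algebra automorphism φ of M_n(ℂ) ⊕ M_n(ℂ) fixing the minimal central projections such that φ ∘ S ∘ φ⁻¹ is the map x ⊕ y ↦ yᵀ ⊕ xᵀ. -/

import Mathlib

open Matrix

theorem stmt12 (n : ℕ)
    (S : (Matrix (Fin n) (Fin n) ℂ × Matrix (Fin n) (Fin n) ℂ) →ₗ[ℂ]
         (Matrix (Fin n) (Fin n) ℂ × Matrix (Fin n) (Fin n) ℂ))
    (hmul : ∀ x y, S (x * y) = S y * S x) (hinvol : ∀ x, S (S x) = x)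
    (hswap : S (1, 0) = (0, 1)) :
    ∃ φ : (Matrix (Fin n) (Fin n) ℂ × Matrix (Fin n) (Fin n) ℂ) ≃ₐ[ℂ]
          (Matrix (Fin n) (Fin n) ℂ × Matrix (Fin n) (Fin n) ℂ),
      φ (1, 0) = (1, 0) ∧ φ (0, 1) = (0, 1) ∧
      ∀ x y, φ (S (φ.symm (x, y))) = (yᵀ, xᵀ) := by
  classical
  set A := Matrix (Fin n) (Fin n) ℂ with hA
  have hS01 : S (0, 1) = (1, 0) := by
    have h := hinvol (1, 0); rw [hswap] at h; exact h
  set f : A → A := fun x => (S (x, 0)).2 with hf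
  set g : A → A := fun y => (S (0, y)).1 with hg
  have hSx : ∀ x : A, S (x, 0) = (0, f x) := by
    intro x
    have h : S (x, 0) = ((0, 1) : A × A) * S (x, 0) := by
      rw [← hswap, ← hmul]
      congr 1
      ext <;> simp [Prod.mul_def]
    rw [Prod.ext_iff] at h ⊢
    constructor
    · rw [h.1]; simp [Prod.mul_def]
    · simp [hf]
  have hSy : ∀ y : A, S (0, y) = (g y, 0) := by
    intro y
    have h : S (0, y) = S (0, y) * ((1, 0) : A × A) := by
      rw [← hS01, ← hmul]
      congr 1
      ext <;> simp [Prod.mul_def]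
    rw [Prod.ext_iff] at h ⊢
    constructor
    · simp [hg]
    · rw [h.2]; simp [Prod.mul_def]
  have hgf : ∀ x : A, g (f x) = x := by
    intro x
    have h := hinvol (x, 0)
    rw [hSx, hSy] at h
    exact (Prod.ext_iff.mp h).1
  have hfg : ∀ y : A, f (g y) = y := by
    intro y
    have h := hinvol (0, y)
    rw [hSy, hSx] at h
    exact (Prod.ext_iff.mp h).2
  have hgmul : ∀ a b : A, g (a * b) = g b * g a := by
    intro a b
    have h := hmul ((0, a) : A × A) (0, b)
    have hab : ((0, a) : A × A) * (0, b) = (0, a * b) := by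
      ext <;> simp [Prod.mul_def]
    rw [hab, hSy, hSy, hSy] at h
    have := (Prod.ext_iff.mp h).1
    simpa [Prod.mul_def] using this
  have hgadd : ∀ a b : A, g (a + b) = g a + g b := by
    intro a b
    have h : ((0, a + b) : A × A) = (0, a) + (0, b) := by ext <;> simp
    simp only [hg]
    rw [h, map_add]
    simp
  have hgsmul : ∀ (c : ℂ) (a : A), g (c • a) = c • g a := by
    intro c a
    have h : ((0, c • a) : A × A) = c • (0, a) := by ext <;> simp
    simp only [hg]
    rw [h, _root_.map_smul]
    simp
  have hg1 : g 1 = 1 := by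
    simp only [hg]
    rw [hS01]
  have hg0 : g 0 = 0 := by
    simp only [hg]
    have : ((0, 0) : A × A) = 0 := rfl
    rw [this, map_zero]
    simp
  refine ⟨{ toFun := fun p => (p.1, (g p.2)ᵀ)
            invFun := fun p => (p.1, f (p.2ᵀ))
            left_inv := ?_
            right_inv := ?_
            map_mul' := ?_
            map_add' := ?_
            commutes' := ?_ }, ?_, ?_, ?_⟩
  · intro p
    simp [transpose_transpose, hfg]
  · intro p
    simp [hgf, transpose_transpose]
  · intro p q
    ext
    · simp [Prod.mul_def]
    · simp only [Prod.mul_def]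
      rw [hgmul, transpose_mul]
  · intro p q
    refine Prod.ext rfl ?_
    show (g (p.2 + q.2))ᵀ = (g p.2)ᵀ + (g q.2)ᵀ
    rw [hgadd, transpose_add]
  · intro c
    have halg : (algebraMap ℂ (A × A)) c = (algebraMap ℂ A c, algebraMap ℂ A c) := rfl
    rw [halg]
    simp only
    congr 1
    have h1 : (algebraMap ℂ A c) = c • (1 : A) := (Algebra.algebraMap_eq_smul_one c)
    rw [h1, hgsmul, hg1, transpose_smul, transpose_one]
  · simp [hg0]
  · simp [hg1]
  · intro x y
    have hsymm : (S (x, f (yᵀ))) = (yᵀ, f x) := by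
      have hdec : ((x, f (yᵀ)) : A × A) = (x, 0) + (0, f (yᵀ)) := by ext <;> simp
      rw [hdec, map_add, hSx, hSy, hgf]
      ext <;> simp
    simp only [AlgEquiv.coe_mk, Equiv.coe_fn_mk, AlgEquiv.symm_mk]
    show ((S (x, f (yᵀ))).1, (g (S (x, f (yᵀ))).2)ᵀ) = (yᵀ, xᵀ)
    rw [hsymm]
    simp [hgf]
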